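/- Let V be a real vector space of dimension n ≥ 2 and let ξ ⊂ V be a one-dimensional subspace. Then the intersection, over all hyperplanes Y ⊂ V complementary to ξ (i.e. V = ξ ⊕ Y), of the k-th exterior powers ⋀^k Y ⊂ ⋀^k V, is the zero subspace, for every 1 ≤ k ≤ n-1. -/

import Mathlib

open ExteriorAlgebra

section Stmt0Aux

variable {V : Type*} [AddCommGroup V] [Module ℝ V]

/-- The "determinant coefficient" functional on the exterior algebra attached to a
`k`-tuple of linear functionals. -/
noncomputable def Stmt0.theta (k : ℕ) (F : Fin k → (V →ₗ[ℝ] ℝ)) :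
    ExteriorAlgebra ℝ V →ₗ[ℝ] ℝ :=
  ExteriorAlgebra.liftAlternating
    (Pi.single k (Matrix.detRowAlternating.compLinearMap (LinearMap.pi F)))

namespace Stmt0

lemma theta_apply (k : ℕ) (F : Fin k → (V →ₗ[ℝ] ℝ)) (m : Fin k → V) :
    theta k F (ιMulti ℝ k m) = Matrix.det (Matrix.of fun j i => F i (m j)) := by
  rw [theta, ExteriorAlgebra.liftAlternating_apply_ιMulti, Pi.single_eq_same]
  rfl

lemma map_exteriorPower_eq (k : ℕ) (W : Submodule ℝ V) :
    Submodule.map (ExteriorAlgebra.map (W.subtype)).toLinearMap (⋀[ℝ]^k W)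
      = Submodule.span ℝ
          (Set.range fun m : Fin k → W => ιMulti ℝ k fun j => (m j : V)) := by
  rw [← ExteriorAlgebra.ιMulti_span_fixedDegree, Submodule.map_span, ← Set.range_comp]
  congr 1
  funext m
  simp [Function.comp_def, ExteriorAlgebra.map_apply_ιMulti]

lemma theta_eq_zero_of_vanish (k : ℕ) (F : Fin k → (V →ₗ[ℝ] ℝ)) (W : Submodule ℝ V)
    (i0 : Fin k) (hF : ∀ w ∈ W, F i0 w = 0) {x : ExteriorAlgebra ℝ V}
    (hx : x ∈ Submodule.span ℝ
      (Set.range fun m : Fin k → W => ιMulti ℝ k fun j => (m j : V))) :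
    theta k F x = 0 := by
  have h : Submodule.span ℝ
      (Set.range fun m : Fin k → W => ιMulti ℝ k fun j => (m j : V))
        ≤ LinearMap.ker (theta k F) := by
    rw [Submodule.span_le]
    rintro z ⟨m, rfl⟩
    rw [SetLike.mem_coe, LinearMap.mem_ker, theta_apply]
    exact Matrix.det_eq_zero_of_column_eq_zero i0 fun j => hF _ (m j).2
  exact h hx

lemma theta_congr (k : ℕ) (F F' : Fin k → (V →ₗ[ℝ] ℝ)) (W : Submodule ℝ V)
    (hFF' : ∀ i, ∀ w ∈ W, F i w = F' i w) {x : ExteriorAlgebra ℝ V}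
    (hx : x ∈ Submodule.span ℝ
      (Set.range fun m : Fin k → W => ιMulti ℝ k fun j => (m j : V))) :
    theta k F x = theta k F' x := by
  have h : Submodule.span ℝ
      (Set.range fun m : Fin k → W => ιMulti ℝ k fun j => (m j : V))
        ≤ LinearMap.ker (theta k F - theta k F') := by
    rw [Submodule.span_le]
    rintro z ⟨m, rfl⟩
    rw [SetLike.mem_coe, LinearMap.mem_ker, LinearMap.sub_apply, sub_eq_zero,
      theta_apply, theta_apply]
    congr 1
    ext j i
    exact hFF' i _ (m j).2
  have := h hx
  rwa [LinearMap.mem_ker, LinearMap.sub_apply, sub_eq_zero] at this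

lemma theta_eq_zero_of_repeat (k : ℕ) (F : Fin k → (V →ₗ[ℝ] ℝ)) (W : Submodule ℝ V)
    (a b : Fin k) (hab : a ≠ b) (hF : F a = F b) {x : ExteriorAlgebra ℝ V}
    (hx : x ∈ Submodule.span ℝ
      (Set.range fun m : Fin k → W => ιMulti ℝ k fun j => (m j : V))) :
    theta k F x = 0 := by
  have h : Submodule.span ℝ
      (Set.range fun m : Fin k → W => ιMulti ℝ k fun j => (m j : V))
        ≤ LinearMap.ker (theta k F) := by
    rw [Submodule.span_le]
    rintro z ⟨m, rfl⟩
    rw [SetLike.mem_coe, LinearMap.mem_ker, theta_apply, ← Matrix.det_transpose]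
    refine Matrix.det_zero_of_row_eq hab (funext fun j => ?_)
    simp [Matrix.transpose, hF]
  exact h hx

lemma key_sum (k d : ℕ) (W : Submodule ℝ V) (b : Module.Basis (Fin d) ℝ W)
    (g : Fin d → (V →ₗ[ℝ] ℝ)) (hg : ∀ i j, g i ((b j : W) : V) = if j = i then 1 else 0)
    (τ : Fin k → Fin d) :
    ∑ σ : Fin k → Fin d,
      theta k (fun i => g (σ i)) (ιMulti ℝ k fun j => ((b (τ j) : W) : V))
        • (ιMulti ℝ k fun j => ((b (σ j) : W) : V))
      = (k.factorial : ℝ) • (ιMulti ℝ k fun j => ((b (τ j) : W) : V)) := by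
  classical
  set e : (Fin k → Fin d) → ExteriorAlgebra ℝ V :=
    fun σ => ιMulti ℝ k fun j => ((b (σ j) : W) : V) with he
  have hdet : ∀ σ : Fin k → Fin d,
      theta k (fun i => g (σ i)) (e τ)
        = Matrix.det (Matrix.of fun j i => if τ j = σ i then (1:ℝ) else 0) := by
    intro σ
    rw [he, theta_apply]
    congr 1
    ext j i
    simp [hg]
  show ∑ σ : Fin k → Fin d, theta k (fun i => g (σ i)) (e τ) • e σ
      = (k.factorial : ℝ) • e τ
  simp only [hdet]
  by_cases hτ : Function.Injective τ
  · have himg : ∑ σ : Fin k → Fin d,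
        Matrix.det (Matrix.of fun j i => if τ j = σ i then (1:ℝ) else 0) • e σ
        = ∑ σ ∈ Finset.image (fun ρ : Equiv.Perm (Fin k) => τ ∘ ρ) Finset.univ,
            Matrix.det (Matrix.of fun j i => if τ j = σ i then (1:ℝ) else 0) • e σ := by
      refine (Finset.sum_subset (Finset.subset_univ _) fun σ _ hσ => ?_).symm
      by_cases hσi : Function.Injective σ
      · have hcol : ∃ i, ∀ j, τ j ≠ σ i := by
          by_contra hcon
          push_neg at hcon
          choose ρ hρ using hcon
          have hρinj : Function.Injective ρ := fun a b hab =>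
            hσi (by rw [← hρ a, ← hρ b, hab])
          have hbij : Function.Bijective ρ := Finite.injective_iff_bijective.1 hρinj
          exact hσ (Finset.mem_image.2 ⟨Equiv.ofBijective ρ hbij, Finset.mem_univ _,
            funext fun i => hρ i⟩)
        obtain ⟨i, hi⟩ := hcol
        rw [Matrix.det_eq_zero_of_column_eq_zero i fun j => by simp [hi j], zero_smul]
      · obtain ⟨a, a', haa', hne⟩ := Function.not_injective_iff.1 hσi
        rw [← Matrix.det_transpose,
          Matrix.det_zero_of_row_eq hne (funext fun j => by simp [haa']), zero_smul]
    have hinj : ∀ ρ ∈ (Finset.univ : Finset (Equiv.Perm (Fin k))),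
        ∀ ρ' ∈ (Finset.univ : Finset (Equiv.Perm (Fin k))),
        τ ∘ ⇑ρ = τ ∘ ⇑ρ' → ρ = ρ' := by
      intro ρ _ ρ' _ hh
      exact Equiv.ext fun i => hτ (congrFun hh i)
    rw [himg, Finset.sum_image hinj]
    have hterm : ∀ ρ : Equiv.Perm (Fin k),
        Matrix.det (Matrix.of fun j i => if τ j = (τ ∘ ρ) i then (1:ℝ) else 0)
          • e (τ ∘ ρ) = e τ := by
      intro ρ
      have hMat : (Matrix.of fun j i => if τ j = (τ ∘ ρ) i then (1:ℝ) else 0)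
          = (1 : Matrix (Fin k) (Fin k) ℝ).submatrix id ρ := by
        ext j i
        simp [Matrix.one_apply, hτ.eq_iff]
      have hdet2 : Matrix.det (Matrix.of fun j i => if τ j = (τ ∘ ρ) i then (1:ℝ) else 0)
          = ((Equiv.Perm.sign ρ : ℤ) : ℝ) := by
        rw [hMat, Matrix.det_permute', Matrix.det_one, mul_one]
      have hE : e (τ ∘ ρ) = Equiv.Perm.sign ρ • e τ := by
        rw [he]
        exact AlternatingMap.map_perm (ιMulti ℝ k) (fun j => ((b (τ j) : W) : V)) ρ
      rw [hdet2, hE]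
      rcases Int.units_eq_one_or (Equiv.Perm.sign ρ) with h | h <;> simp [h]
    simp only [hterm]
    rw [Finset.sum_const, Finset.card_univ, Fintype.card_perm, Fintype.card_fin,
      Nat.cast_smul_eq_nsmul]
  · obtain ⟨a, a', haa', hne⟩ := Function.not_injective_iff.1 hτ
    have hzero : e τ = 0 :=
      AlternatingMap.map_eq_zero_of_eq (ιMulti ℝ k) _ (by rw [haa']) hne
    rw [hzero, smul_zero]
    refine Finset.sum_eq_zero fun σ _ => ?_
    rw [Matrix.det_zero_of_row_eq hne (funext fun i => by simp [haa']), zero_smul]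

lemma reconstruction (k d : ℕ) (W : Submodule ℝ V) (b : Module.Basis (Fin d) ℝ W)
    (g : Fin d → (V →ₗ[ℝ] ℝ)) (hg : ∀ i j, g i ((b j : W) : V) = if j = i then 1 else 0)
    {x : ExteriorAlgebra ℝ V}
    (hx : x ∈ Submodule.span ℝ
      (Set.range fun m : Fin k → W => ιMulti ℝ k fun j => (m j : V))) :
    ∑ σ : Fin k → Fin d,
      theta k (fun i => g (σ i)) x • (ιMulti ℝ k fun j => ((b (σ j) : W) : V))
      = (k.factorial : ℝ) • x := by
  classical
  set L : ExteriorAlgebra ℝ V →ₗ[ℝ] ExteriorAlgebra ℝ V :=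
    (∑ σ : Fin k → Fin d,
      (LinearMap.toSpanSingleton ℝ _ (ιMulti ℝ k fun j => ((b (σ j) : W) : V))).comp
        (theta k fun i => g (σ i)))
      - (k.factorial : ℝ) • LinearMap.id with hL
  have hker : ∀ τ : Fin k → Fin d,
      (ιMulti ℝ k fun j => ((b (τ j) : W) : V)) ∈ LinearMap.ker L := by
    intro τ
    rw [LinearMap.mem_ker, hL, LinearMap.sub_apply, LinearMap.sum_apply, sub_eq_zero]
    simp only [LinearMap.comp_apply, LinearMap.toSpanSingleton_apply,
      LinearMap.smul_apply, LinearMap.id_apply]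
    exact key_sum k d W b g hg τ
  have hspan : Submodule.span ℝ
      (Set.range fun m : Fin k → W => ιMulti ℝ k fun j => (m j : V))
        ≤ LinearMap.ker L := by
    rw [Submodule.span_le]
    rintro z ⟨m, rfl⟩
    have hm : (fun j => ((m j : W) : V))
        = fun j => ∑ t, b.repr (m j) t • ((b t : W) : V) := by
      funext j
      conv_lhs => rw [← b.sum_repr (m j)]
      push_cast
      rfl
    show ((ιMulti ℝ k) fun j => ((m j : W) : V)) ∈ LinearMap.ker L
    rw [hm]
    have h1 : (ιMulti ℝ k (M := V)) (fun j => ∑ t, b.repr (m j) t • ((b t : W) : V))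
        = ∑ r : Fin k → Fin d, (∏ j, b.repr (m j) (r j)) •
            (ιMulti ℝ k fun j => ((b (r j) : W) : V)) := by
      rw [show ⇑(ιMulti ℝ k (M := V)) = ⇑(ιMulti ℝ k (M := V)).toMultilinearMap from rfl]
      rw [MultilinearMap.map_sum]
      exact Finset.sum_congr rfl fun r _ => MultilinearMap.map_smul_univ _ _ _
    rw [h1]
    exact Submodule.sum_mem _ fun r _ => Submodule.smul_mem _ _ (hker r)
  have hx' := hspan hx
  rw [LinearMap.mem_ker, hL, LinearMap.sub_apply, sub_eq_zero, LinearMap.sum_apply] at hx'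
  simpa only [LinearMap.comp_apply, LinearMap.toSpanSingleton_apply,
    LinearMap.smul_apply, LinearMap.id_apply] using hx'

end Stmt0

end Stmt0Aux

open Stmt0 in
/-- For a line `ξ` in an `n`-dimensional real vector space `V` (`n ≥ 2`) and
`1 ≤ k ≤ n-1`, the intersection over all complementary hyperplanes `Y` of the images
of `⋀^k Y` inside `⋀^k V` (viewed inside the exterior algebra of `V`) is zero. -/
theorem stmt0 {V : Type*} [AddCommGroup V] [Module ℝ V] [FiniteDimensional ℝ V]
    {n : ℕ} (hn : 2 ≤ n) (hdim : Module.finrank ℝ V = n)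
    (ξ : Submodule ℝ V) (hξ : Module.finrank ℝ ξ = 1)
    (k : ℕ) (hk1 : 1 ≤ k) (hk2 : k ≤ n - 1) :
    ⨅ (Y : Submodule ℝ V) (_ : IsCompl ξ Y),
      Submodule.map (ExteriorAlgebra.map (Y.subtype)).toLinearMap (⋀[ℝ]^k ↥Y) = ⊥ := by
  classical
  rw [Submodule.eq_bot_iff]
  intro x hx
  have hmem : ∀ Y : Submodule ℝ V, IsCompl ξ Y →
      x ∈ Submodule.span ℝ
        (Set.range fun m : Fin k → Y => ιMulti ℝ k fun j => (m j : V)) := by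
    intro Y hY
    rw [← map_exteriorPower_eq]
    exact (Submodule.mem_iInf _).1 ((Submodule.mem_iInf _).1 hx Y) hY
  obtain ⟨Y₀, hY₀⟩ := Submodule.exists_isCompl ξ
  set d := Module.finrank ℝ Y₀ with hd
  set b : Module.Basis (Fin d) ℝ Y₀ := Module.finBasis ℝ Y₀ with hb
  set bξ : Module.Basis (Fin 1) ℝ ξ := Module.finBasisOfFinrankEq ℝ ξ hξ with hbξ
  set vV : V := (bξ 0 : V) with hvV
  set πξ : V →ₗ[ℝ] ξ := ξ.projectionOnto Y₀ hY₀ with hπξ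
  set πY : V →ₗ[ℝ] Y₀ := Y₀.projectionOnto ξ hY₀.symm with hπY
  set f : V →ₗ[ℝ] ℝ := (bξ.coord 0).comp πξ with hf
  set g : Fin d → (V →ₗ[ℝ] ℝ) := fun i => (b.coord i).comp πY with hgdef
  have hg : ∀ i j, g i ((b j : Y₀) : V) = if j = i then 1 else 0 := by
    intro i j
    rw [hgdef]
    simp only [hπY, LinearMap.comp_apply, Submodule.linearProjOfIsCompl_apply_left hY₀.symm,
      Module.Basis.coord_apply, Module.Basis.repr_self_apply]
  have hgv : ∀ i, g i vV = 0 := by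
    intro i
    rw [hgdef, hvV]
    simp [hπY, Submodule.linearProjOfIsCompl_apply_right' hY₀.symm (bξ 0).2]
  have hfY : ∀ w ∈ Y₀, f w = 0 := by
    intro w hw
    rw [hf]
    simp [hπξ, Submodule.linearProjOfIsCompl_apply_right' hY₀ hw]
  have hfv : f vV = 1 := by
    rw [hf, hvV]
    simp only [hπξ, LinearMap.comp_apply, Submodule.linearProjOfIsCompl_apply_left hY₀,
      Module.Basis.coord_apply, Module.Basis.repr_self_apply]
    simp
  have hx₀ := hmem Y₀ hY₀
  have key : ∀ σ : Fin k → Fin d, theta k (fun i => g (σ i)) x = 0 := by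
    intro σ
    by_cases hσ : Function.Injective σ
    · set z : Fin k := ⟨0, hk1⟩ with hz
      set g' : V →ₗ[ℝ] ℝ := g (σ z) with hg'
      set S : V →ₗ[ℝ] V := LinearMap.id + (LinearMap.toSpanSingleton ℝ V vV).comp g' with hS
      have hSapp : ∀ u, S u = u + g' u • vV := fun u => rfl
      set Y' := Y₀.map S with hY'def
      have hvmem : vV ∈ ξ := (bξ 0).2
      have hg'v : g' vV = 0 := hgv (σ z)
      have hY' : IsCompl ξ Y' := by
        constructor
        · rw [Submodule.disjoint_def]
          intro w hwξ hwY'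
          obtain ⟨u, hu, rfl⟩ := Submodule.mem_map.1 hwY'
          have huξ : u ∈ ξ := by
            have hrw : u = S u - g' u • vV := by rw [hSapp]; abel
            rw [hrw]
            exact ξ.sub_mem hwξ (ξ.smul_mem _ hvmem)
          have hu0 : u = 0 := (Submodule.disjoint_def.1 hY₀.disjoint) u huξ hu
          rw [hu0]
          simp
        · rw [codisjoint_iff_le_sup]
          intro w _
          have hw : w ∈ ξ ⊔ Y₀ := by rw [hY₀.sup_eq_top]; trivial
          obtain ⟨a, ha, u, hu, rfl⟩ := Submodule.mem_sup.1 hw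
          refine Submodule.mem_sup.2
            ⟨a - g' u • vV, ξ.sub_mem ha (ξ.smul_mem _ hvmem),
              S u, Submodule.mem_map_of_mem hu, ?_⟩
          rw [hSapp]
          abel
      have hx' := hmem Y' hY'
      have hagree : ∀ w ∈ Y', f w = g' w := by
        intro w hw
        obtain ⟨u, hu, rfl⟩ := Submodule.mem_map.1 hw
        rw [hSapp]
        rw [map_add, map_add, map_smul, map_smul, hfY u hu, hfv, hg'v]
        simp
      set F' : Fin k → (V →ₗ[ℝ] ℝ) := Function.update (fun i => g (σ i)) z f with hF'
      have h1 : theta k (fun i => g (σ i)) x = theta k F' x := by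
        refine theta_congr k _ _ Y' ?_ hx'
        intro i w hw
        by_cases hi : i = z
        · subst hi
          rw [hF', Function.update_self]
          exact (hagree w hw).symm
        · rw [hF', Function.update_of_ne hi]
      have h2 : theta k F' x = 0 := by
        refine theta_eq_zero_of_vanish k F' Y₀ z ?_ hx₀
        intro w hw
        rw [hF', Function.update_self]
        exact hfY w hw
      rw [h1, h2]
    · obtain ⟨a, a', haa', hne⟩ := Function.not_injective_iff.1 hσ
      exact theta_eq_zero_of_repeat k _ Y₀ a a' hne (by rw [haa']) hx₀
  have hrec := reconstruction k d Y₀ b g hg hx₀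
  simp only [key, zero_smul, Finset.sum_const_zero] at hrec
  have hfac : (k.factorial : ℝ) ≠ 0 := Nat.cast_ne_zero.2 k.factorial_ne_zero
  rcases smul_eq_zero.1 hrec.symm with h | h
  · exact absurd h hfac
  · exact h
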